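/- arXiv:1506.05937 — 2 statements merged into one kernel-verified Lean document; each statement's English description precedes it below -/
import Mathlib

section
/- Let ℓ be a binomial random variable with parameters n and λ/n where λ ≤ n. Then E[ℓ | ℓ > 2λ] < 3λ + 1. -/
open MeasureTheory ProbabilityTheory
open scoped ENNReal NNReal

noncomputable def binomPMF (n lam k : ℕ) : ℝ :=
  (n.choose k : ℝ) * ((lam : ℝ) / n) ^ k * (1 - (lam : ℝ) / n) ^ (n - k)

lemma binomPMF_nonneg {n lam : ℕ} (hlam : 1 ≤ lam) (hlamn : lam ≤ n) (k : ℕ) :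
    0 ≤ binomPMF n lam k := by
  unfold binomPMF
  have h : 0 < n := by omega
  have h1 : (0:ℝ) ≤ (lam:ℝ)/n := by positivity
  have h2 : (0:ℝ) ≤ 1 - (lam:ℝ)/n := by
    have : (lam:ℝ)/n ≤ 1 := by
      rw [div_le_one (by exact_mod_cast h)]
      exact_mod_cast hlamn
    linarith
  positivity

lemma binomPMF_ratio {n lam : ℕ} (hlam : 1 ≤ lam) (h2l : 2*lam+1 ≤ n)
    {k : ℕ} (hk : 2*lam+1 ≤ k) :
    binomPMF n lam (k+1) ≤ ((lam:ℝ)/(2*lam+2)) * binomPMF n lam k := by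
  have hn0 : (0:ℝ) < n := by exact_mod_cast (by omega : 0 < n)
  have hrho : (0:ℝ) ≤ (lam:ℝ)/(2*lam+2) := by positivity
  rcases le_or_gt n k with hnk | hkn
  · have h0 : n.choose (k+1) = 0 := Nat.choose_eq_zero_of_lt (by omega)
    have hpk : 0 ≤ binomPMF n lam k := binomPMF_nonneg hlam (by omega) k
    calc binomPMF n lam (k+1) = 0 := by unfold binomPMF; rw [h0]; simp
    _ ≤ _ := by positivity
  have hln : lam < n := by omega
  have hchoose : (n.choose (k+1) : ℝ) * (k+1) = (n.choose k : ℝ) * ((n:ℝ) - k) := by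
    have h1 := Nat.choose_succ_right_eq n k
    have h2 : ((n.choose (k+1) * (k+1) : ℕ) : ℝ) = ((n.choose k * (n-k) : ℕ) : ℝ) := by
      rw [h1]
    push_cast [Nat.cast_sub hkn.le] at h2
    linarith [h2]
  have ha : (0:ℝ) ≤ (n.choose k : ℝ) := by positivity
  have hk1 : (0:ℝ) < (k:ℝ) + 1 := by positivity
  have hklam : 2*(lam:ℝ)+2 ≤ (k:ℝ)+1 := by
    have : (2*lam+2 : ℕ) ≤ k+1 := by omega
    exact_mod_cast this
  have hnk' : (k:ℝ) ≤ (n:ℝ) := by exact_mod_cast hkn.le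
  have hlamr : (1:ℝ) ≤ (lam:ℝ) := by exact_mod_cast hlam
  have hlamn' : (lam:ℝ) + 1 ≤ (n:ℝ) := by
    have : lam + 1 ≤ n := by omega
    exact_mod_cast this
  set x := (lam:ℝ)/n with hx
  set y := 1 - (lam:ℝ)/n with hy
  have hx0 : 0 ≤ x := by positivity
  have hy0 : 0 ≤ y := by
    rw [hy]
    have : (lam:ℝ)/n ≤ 1 := by rw [div_le_one hn0]; linarith
    linarith
  have hexp : n - k = (n - (k+1)) + 1 := by omega
  have key : (n.choose (k+1) : ℝ) * x ≤ ((lam:ℝ)/(2*lam+2)) * (n.choose k : ℝ) * y := by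
    have e1 : (n.choose (k+1) : ℝ) = (n.choose k : ℝ) * ((n:ℝ) - k) / ((k:ℝ)+1) := by
      field_simp at hchoose ⊢; linarith
    have h2 : ((n:ℝ) - k) ≤ (n:ℝ) - lam := by
      have : (lam:ℝ) ≤ (k:ℝ) := by exact_mod_cast (by omega : lam ≤ k)
      linarith
    rw [e1, hx, hy]
    rw [div_mul_div_comm, div_le_iff₀ (by positivity : (0:ℝ) < ((k:ℝ)+1)*n),
      mul_comm]
    have expand : (lam:ℝ)/(2*lam+2) * (n.choose k : ℝ) * (1 - (lam:ℝ)/n) * (((k:ℝ)+1) * n)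
        = (lam:ℝ) * (n.choose k : ℝ) * (((n:ℝ)-lam) * ((k:ℝ)+1)) / (2*lam+2) := by
      field_simp
    rw [expand, le_div_iff₀ (by positivity : (0:ℝ) < 2*(lam:ℝ)+2)]
    have hB : (0:ℝ) ≤ (lam:ℝ) * (n.choose k : ℝ) := by positivity
    have hnl : (0:ℝ) ≤ (n:ℝ) - lam := by linarith
    have step1 : (lam:ℝ) * (n.choose k : ℝ) * ((n:ℝ)-k) * (2*lam+2)
        ≤ (lam:ℝ) * (n.choose k : ℝ) * ((n:ℝ)-lam) * (2*lam+2) :=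
      mul_le_mul_of_nonneg_right (mul_le_mul_of_nonneg_left h2 hB) (by positivity)
    have step2 : (lam:ℝ) * (n.choose k : ℝ) * ((n:ℝ)-lam) * (2*lam+2)
        ≤ (lam:ℝ) * (n.choose k : ℝ) * ((n:ℝ)-lam) * ((k:ℝ)+1) :=
      mul_le_mul_of_nonneg_left hklam (by positivity)
    nlinarith [step1, step2]
  calc binomPMF n lam (k+1)
      = ((n.choose (k+1) : ℝ) * x) * (x^k * y^(n-(k+1))) := by
        unfold binomPMF; rw [← hx, ← hy, pow_succ]; ring
    _ ≤ (((lam:ℝ)/(2*lam+2)) * (n.choose k : ℝ) * y) * (x^k * y^(n-(k+1))) := by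
        apply mul_le_mul_of_nonneg_right key (by positivity)
    _ = ((lam:ℝ)/(2*lam+2)) * binomPMF n lam k := by
        unfold binomPMF; rw [← hx, ← hy, hexp, pow_succ]; ring

lemma binomPMF_geo {n lam : ℕ} (hlam : 1 ≤ lam) (h2l : 2*lam+1 ≤ n) (j : ℕ) :
    binomPMF n lam (2*lam+1+j) ≤ ((lam:ℝ)/(2*lam+2))^j * binomPMF n lam (2*lam+1) := by
  induction j with
  | zero => simp
  | succ j ih =>
    have h1 : binomPMF n lam (2*lam+1+(j+1)) ≤ ((lam:ℝ)/(2*lam+2)) * binomPMF n lam (2*lam+1+j) := by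
      have := binomPMF_ratio hlam h2l (k := 2*lam+1+j) (by omega)
      convert this using 2 <;> omega
    calc binomPMF n lam (2*lam+1+(j+1)) ≤ ((lam:ℝ)/(2*lam+2)) * binomPMF n lam (2*lam+1+j) := h1
      _ ≤ ((lam:ℝ)/(2*lam+2)) * (((lam:ℝ)/(2*lam+2))^j * binomPMF n lam (2*lam+1)) :=
          mul_le_mul_of_nonneg_left ih (by positivity)
      _ = ((lam:ℝ)/(2*lam+2))^(j+1) * binomPMF n lam (2*lam+1) := by ring

lemma binomPMF_pos {n lam : ℕ} (hlam : 1 ≤ lam) (h2l : 2*lam+1 ≤ n) :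
    0 < binomPMF n lam (2*lam+1) := by
  have hn0 : (0:ℝ) < n := by exact_mod_cast (by omega : 0 < n)
  have hc : 0 < n.choose (2*lam+1) := Nat.choose_pos h2l
  have hx : (0:ℝ) < (lam:ℝ)/n := by
    have : (0:ℝ) < (lam:ℝ) := by exact_mod_cast hlam
    positivity
  have hy : (0:ℝ) < 1 - (lam:ℝ)/n := by
    have h1 : (lam:ℝ) < (n:ℝ) := by exact_mod_cast (by omega : lam < n)
    rw [sub_pos, div_lt_one hn0]; exact h1
  have hc' : (0:ℝ) < (n.choose (2*lam+1) : ℝ) := by exact_mod_cast hc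
  unfold binomPMF
  positivity

lemma binomPMF_sum_lt {n lam : ℕ} (hlam : 1 ≤ lam) (h2l : 2*lam+1 ≤ n) :
    ∑ j ∈ Finset.range (n+1), ((2*lam+1+j : ℕ) : ℝ) * binomPMF n lam (2*lam+1+j)
      < (3*(lam:ℝ)+1) * ∑ j ∈ Finset.range (n+1), binomPMF n lam (2*lam+1+j) := by
  set ρ := (lam:ℝ)/(2*lam+2) with hρ
  have hlamr : (1:ℝ) ≤ (lam:ℝ) := by exact_mod_cast hlam
  have hρ0 : 0 ≤ ρ := by positivity
  have hρ1 : ρ < 1 := by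
    rw [hρ, div_lt_one (by positivity)]; linarith
  have hp0 : 0 < binomPMF n lam (2*lam+1) := binomPMF_pos hlam h2l
  have hpn : ∀ j, 0 ≤ binomPMF n lam (2*lam+1+j) :=
    fun j => binomPMF_nonneg hlam (by omega) _
  set p0 := binomPMF n lam (2*lam+1)
  -- geometric series sum
  have hsum : HasSum (fun j : ℕ => (j:ℝ) * ρ^j) (ρ/(1-ρ)^2) :=
    hasSum_coe_mul_geometric_of_norm_lt_one (by rw [Real.norm_eq_abs, abs_of_nonneg hρ0]; exact hρ1)
  have hT1 : ∑ j ∈ Finset.range (n+1), (j:ℝ) * ρ^j ≤ ρ/(1-ρ)^2 :=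
    sum_le_hasSum _ (fun i _ => by positivity) hsum
  have hρ2 : (0:ℝ) < 1 - ρ := by linarith
  have hgeo : ρ/(1-ρ)^2 < (lam:ℝ) := by
    have h2 : (1:ℝ) - ρ = ((lam:ℝ)+2)/(2*lam+2) := by rw [hρ]; field_simp; ring
    rw [div_lt_iff₀ (pow_pos hρ2 2), h2, div_pow, hρ]
    have h3 : (lam:ℝ) * (((lam:ℝ)+2)^2/(2*(lam:ℝ)+2)^2)
        = ((lam:ℝ) * ((lam:ℝ)+2)^2) / (2*(lam:ℝ)+2)^2 := by ring
    rw [h3, div_lt_div_iff₀ (by positivity) (by positivity)]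
    have hl : (0:ℝ) < (lam:ℝ) := by linarith
    nlinarith [mul_pos hl (mul_pos hl hl), mul_pos hl hl, hl, sq_nonneg ((lam:ℝ)-1)]
  have hT2 : ∑ j ∈ Finset.range (n+1), (j:ℝ) * binomPMF n lam (2*lam+1+j)
      ≤ p0 * ∑ j ∈ Finset.range (n+1), (j:ℝ) * ρ^j := by
    rw [Finset.mul_sum]
    apply Finset.sum_le_sum
    intro j _
    have := binomPMF_geo hlam h2l j
    calc (j:ℝ) * binomPMF n lam (2*lam+1+j) ≤ (j:ℝ) * (ρ^j * p0) :=
          mul_le_mul_of_nonneg_left this (by positivity)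
      _ = p0 * ((j:ℝ) * ρ^j) := by ring
  have hp0S : p0 ≤ ∑ j ∈ Finset.range (n+1), binomPMF n lam (2*lam+1+j) := by
    have h0 : (0:ℕ) ∈ Finset.range (n+1) := by simp
    have := Finset.single_le_sum (f := fun j => binomPMF n lam (2*lam+1+j))
      (fun i _ => hpn i) h0
    simpa using this
  have hT : ∑ j ∈ Finset.range (n+1), (j:ℝ) * binomPMF n lam (2*lam+1+j)
      < (lam:ℝ) * ∑ j ∈ Finset.range (n+1), binomPMF n lam (2*lam+1+j) := by
    calc ∑ j ∈ Finset.range (n+1), (j:ℝ) * binomPMF n lam (2*lam+1+j)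
        ≤ p0 * ∑ j ∈ Finset.range (n+1), (j:ℝ) * ρ^j := hT2
      _ ≤ p0 * (ρ/(1-ρ)^2) := mul_le_mul_of_nonneg_left hT1 hp0.le
      _ < p0 * (lam:ℝ) := mul_lt_mul_of_pos_left hgeo hp0
      _ ≤ (lam:ℝ) * ∑ j ∈ Finset.range (n+1), binomPMF n lam (2*lam+1+j) := by
          rw [mul_comm]
          exact mul_le_mul_of_nonneg_left hp0S (by positivity)
  have hsplit : ∑ j ∈ Finset.range (n+1), ((2*lam+1+j : ℕ) : ℝ) * binomPMF n lam (2*lam+1+j)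
      = (2*(lam:ℝ)+1) * (∑ j ∈ Finset.range (n+1), binomPMF n lam (2*lam+1+j))
        + ∑ j ∈ Finset.range (n+1), (j:ℝ) * binomPMF n lam (2*lam+1+j) := by
    rw [Finset.mul_sum, ← Finset.sum_add_distrib]
    apply Finset.sum_congr rfl
    intro j _
    push_cast
    ring
  rw [hsplit]
  have hSnn : 0 ≤ ∑ j ∈ Finset.range (n+1), binomPMF n lam (2*lam+1+j) :=
    Finset.sum_nonneg (fun i _ => hpn i)
  nlinarith [hT]

/-- For `ℓ ∼ Bin(n, λ/n)` with `λ ≤ n`, the conditional expectation satisfies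
`E[ℓ | ℓ > 2λ] < 3λ + 1` (assuming the conditioning event has positive
probability). -/
theorem stmt15 {Ω : Type*} [MeasurableSpace Ω] (μ : Measure Ω) [IsProbabilityMeasure μ]
    (n lam : ℕ) (hlam : 1 ≤ lam) (hlamn : lam ≤ n)
    (L : Ω → ℕ) (hLmeas : Measurable L)
    (hbinom : ∀ k : ℕ, μ {ω | L ω = k} =
      ENNReal.ofReal ((n.choose k : ℝ) * ((lam : ℝ) / n) ^ k *
        (1 - (lam : ℝ) / n) ^ (n - k)))
    (hpos : 0 < μ {ω | 2 * lam < L ω}) :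
    ∫ ω, (L ω : ℝ) ∂(μ[|{ω | 2 * lam < L ω}]) < 3 * lam + 1 := by
  set A := {ω | 2 * lam < L ω} with hA
  set m := 2*lam+1 with hm
  have hSmeas : ∀ k : ℕ, MeasurableSet {ω | L ω = k} :=
    fun k => hLmeas (measurableSet_singleton k)
  have hAmeas : MeasurableSet A := hLmeas measurableSet_Ioi
  have hμS : ∀ k, μ {ω | L ω = k} = ENNReal.ofReal (binomPMF n lam k) := fun k => hbinom k
  have hSzero : ∀ k, n < k → μ {ω | L ω = k} = 0 := by
    intro k hk
    rw [hμS k]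
    unfold binomPMF
    rw [Nat.choose_eq_zero_of_lt hk]
    simp
  have hAunion : A = ⋃ j : ℕ, {ω | L ω = m + j} := by
    ext ω
    simp only [hA, Set.mem_setOf_eq, Set.mem_iUnion]
    constructor
    · intro h; exact ⟨L ω - m, by omega⟩
    · rintro ⟨j, hj⟩; omega
  have hdisj : Pairwise (Function.onFun Disjoint fun j : ℕ => {ω | L ω = m + j}) := by
    intro i j hij
    simp only [Function.onFun]
    rw [Set.disjoint_left]
    intro ω hi hj'
    simp only [Set.mem_setOf_eq] at hi hj'
    omega
  have hμA : μ A = ∑' j : ℕ, μ {ω | L ω = m + j} := by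
    rw [hAunion]; exact measure_iUnion hdisj (fun j => hSmeas _)
  have h2l : 2*lam+1 ≤ n := by
    by_contra hcon
    have hz : μ A = 0 := by
      rw [hμA]
      have h0 : ∀ j : ℕ, μ {ω | L ω = m + j} = 0 := fun j => hSzero _ (by omega)
      simp [h0]
    exact absurd hz hpos.ne'
  have htsum : ∑' j : ℕ, μ {ω | L ω = m + j}
      = ∑ j ∈ Finset.range (n+1), μ {ω | L ω = m + j} := by
    apply tsum_eq_sum
    intro j hj
    simp only [Finset.mem_range, not_lt] at hj
    exact hSzero _ (by omega)
  have hofReal : ∑ j ∈ Finset.range (n+1), μ {ω | L ω = m + j}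
      = ENNReal.ofReal (∑ j ∈ Finset.range (n+1), binomPMF n lam (m+j)) := by
    rw [ENNReal.ofReal_sum_of_nonneg (fun j _ => binomPMF_nonneg hlam hlamn _)]
    exact Finset.sum_congr rfl (fun j _ => hμS _)
  set Sr := ∑ j ∈ Finset.range (n+1), binomPMF n lam (m+j) with hSr
  have hμA' : μ A = ENNReal.ofReal Sr := by rw [hμA, htsum, hofReal]
  have hSrpos : 0 < Sr := by
    by_contra h
    push_neg at h
    have hz : μ A = 0 := by rw [hμA']; exact ENNReal.ofReal_eq_zero.mpr h
    exact absurd hz hpos.ne'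
  -- the set where L > n is null
  have hN : μ {ω | n < L ω} = 0 := by
    have hU : {ω | n < L ω} = ⋃ j : ℕ, {ω | L ω = (n+1) + j} := by
      ext ω
      simp only [Set.mem_setOf_eq, Set.mem_iUnion]
      constructor
      · intro h; exact ⟨L ω - (n+1), by omega⟩
      · rintro ⟨j, hj⟩; omega
    rw [hU]
    refine le_antisymm ?_ zero_le
    calc μ (⋃ j : ℕ, {ω | L ω = (n+1) + j}) ≤ ∑' j : ℕ, μ {ω | L ω = (n+1)+j} :=
          measure_iUnion_le _
    _ = 0 := by
        have h0 : ∀ j : ℕ, μ {ω | L ω = (n+1)+j} = 0 := fun j => hSzero _ (by omega)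
        simp [h0]
  set g : Ω → ℝ := fun ω => ∑ j ∈ Finset.range (n+1),
      ({ω' | L ω' = m + j}).indicator (fun _ => ((m+j : ℕ) : ℝ)) ω with hg
  have hae : ∀ᵐ ω ∂μ, ω ∈ A → (L ω : ℝ) = g ω := by
    have hmem := measure_eq_zero_iff_ae_notMem.mp hN
    filter_upwards [hmem] with ω hω hA'
    simp only [Set.mem_setOf_eq, not_lt] at hω
    simp only [hA, Set.mem_setOf_eq] at hA'
    set j0 := L ω - m with hj0
    have hj0mem : j0 ∈ Finset.range (n+1) := by simp only [Finset.mem_range]; omega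
    have hval : L ω = m + j0 := by omega
    simp only [hg]
    rw [Finset.sum_eq_single_of_mem j0 hj0mem]
    · rw [Set.indicator_of_mem (show ω ∈ {ω' | L ω' = m + j0} from hval)]
      exact_mod_cast congrArg (fun k : ℕ => (k:ℝ)) hval
    · intro b _ hb
      apply Set.indicator_of_notMem
      simp only [Set.mem_setOf_eq]
      omega
  have hsub : ∀ j : ℕ, {ω | L ω = m + j} ⊆ A := by
    intro j ω hω
    simp only [hA, Set.mem_setOf_eq, hm] at hω ⊢
    omega
  have hInt : ∫ ω in A, (L ω : ℝ) ∂μ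
      = ∑ j ∈ Finset.range (n+1), ((m+j:ℕ):ℝ) * binomPMF n lam (m+j) := by
    rw [setIntegral_congr_ae hAmeas hae, hg]
    rw [integral_finset_sum _ (fun j _ => (integrable_const _).indicator (hSmeas _))]
    apply Finset.sum_congr rfl
    intro j _
    rw [integral_indicator_const _ (hSmeas _), measureReal_restrict_apply (hSmeas _),
      Set.inter_eq_self_of_subset_left (hsub j), measureReal_def, hμS, smul_eq_mul,
      ENNReal.toReal_ofReal (binomPMF_nonneg hlam hlamn _), mul_comm]
  -- unfold conditional measure
  show ∫ ω, (L ω : ℝ) ∂((μ A)⁻¹ • μ.restrict A) < 3 * lam + 1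
  rw [integral_smul_measure, hInt, hμA', smul_eq_mul]
  have hkey := binomPMF_sum_lt hlam h2l
  rw [ENNReal.toReal_inv, ENNReal.toReal_ofReal hSrpos.le]
  calc Sr⁻¹ * ∑ j ∈ Finset.range (n+1), ((m+j:ℕ):ℝ) * binomPMF n lam (m+j)
      < Sr⁻¹ * ((3*(lam:ℝ)+1) * Sr) := by
        apply mul_lt_mul_of_pos_left _ (inv_pos.mpr hSrpos)
        exact hkey
    _ = 3*(lam:ℝ)+1 := by field_simp
end

section
/- If binary random variables X_1, ..., X_n are negatively correlated (i.e., for all I ⊆ [n], Pr[∀i∈I: X_i = 1] ≤ ∏_{i∈I} Pr[X_i = 1]), then for X = ∑ X_i and any δ ∈ [0,1], Pr[X ≥ (1+δ)E[X]] ≤ exp(−δ²E[X]/3). -/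
open MeasureTheory ProbabilityTheory
open scoped ENNReal NNReal

lemma log_ineq {δ : ℝ} (h0 : 0 ≤ δ) (h1 : δ ≤ 1) :
    δ + δ^2/3 ≤ (1+δ) * Real.log (1+δ) := by
  have hpos : (0:ℝ) < 1 + δ := by linarith
  set v : ℝ := (δ + δ^2/3)/(1+δ) with hv
  have hveq : v * (1+δ) = δ + δ^2/3 := by
    rw [hv]; field_simp
  have hv0 : 0 ≤ v := by positivity
  have hv1 : v ≤ 1 := by
    rw [hv, div_le_one hpos]; nlinarith
  have hexp : Real.exp v ≤ 1 + δ := by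
    have hb := Real.exp_bound' hv0 hv1 (n := 4) (by norm_num)
    norm_num [Finset.sum_range_succ, Nat.factorial] at hb
    nlinarith [pow_pos hpos 4, sq_nonneg δ, sq_nonneg v, sq_nonneg (δ - v), sq_nonneg (δ*v),
      mul_nonneg hv0 h0, sq_nonneg (1 - δ), pow_nonneg hv0 3, pow_nonneg hv0 4,
      mul_nonneg (mul_nonneg hv0 hv0) hv0]
  have hlog : v ≤ Real.log (1+δ) := by
    have := Real.log_le_log (Real.exp_pos v) hexp
    rwa [Real.log_exp] at this
  calc δ + δ^2/3 = v * (1+δ) := hveq.symm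
    _ ≤ Real.log (1+δ) * (1+δ) := mul_le_mul_of_nonneg_right hlog hpos.le
    _ = (1+δ) * Real.log (1+δ) := mul_comm _ _

/-- Multiplicative Chernoff upper-tail bound for negatively correlated binary
random variables: if for all `I ⊆ [n]` both `Pr[∀ i ∈ I, X_i = 1] ≤ ∏_{i ∈ I} Pr[X_i = 1]`
and `Pr[∀ i ∈ I, X_i = 0] ≤ ∏_{i ∈ I} Pr[X_i = 0]`, then for `X = ∑ X_i` and
`δ ∈ [0,1]`, `Pr[X ≥ (1+δ)E[X]] ≤ exp(-δ²E[X]/3)`. -/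
theorem stmt19 {Ω : Type*} [MeasurableSpace Ω] (μ : Measure Ω) [IsProbabilityMeasure μ]
    (n : ℕ) (X : Fin n → Ω → ℝ)
    (hmeas : ∀ i, Measurable (X i))
    (hbinary : ∀ i ω, X i ω = 0 ∨ X i ω = 1)
    (hnegcor1 : ∀ I : Finset (Fin n),
      μ {ω | ∀ i ∈ I, X i ω = 1} ≤ ∏ i ∈ I, μ {ω | X i ω = 1})
    (hnegcor0 : ∀ I : Finset (Fin n),
      μ {ω | ∀ i ∈ I, X i ω = 0} ≤ ∏ i ∈ I, μ {ω | X i ω = 0})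
    (E : ℝ) (hE : E = ∫ ω, (∑ i, X i ω) ∂μ)
    (δ : ℝ) (hδ0 : 0 ≤ δ) (hδ1 : δ ≤ 1) :
    μ {ω | (1 + δ) * E ≤ ∑ i, X i ω}
      ≤ ENNReal.ofReal (Real.exp (-δ ^ 2 * E / 3)) := by
  classical
  set S : Ω → ℝ := fun ω => ∑ i, X i ω with hS
  have h1δ : (0:ℝ) < 1 + δ := by linarith
  set t : ℝ := Real.log (1+δ) with ht
  have het : Real.exp t = 1 + δ := Real.exp_log h1δ
  have ht0 : 0 ≤ t := Real.log_nonneg (by linarith)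
  -- sets A I and their measurability
  set A : Finset (Fin n) → Set Ω := fun I => {ω | ∀ i ∈ I, X i ω = 1} with hA
  have hAmeas : ∀ I, MeasurableSet (A I) := by
    intro I
    have : A I = ⋂ i ∈ I, {ω | X i ω = 1} := by ext ω; simp [hA]
    rw [this]
    exact MeasurableSet.biInter I.countable_toSet
      (fun i _ => (hmeas i) (measurableSet_singleton 1))
  -- products of the X's are indicators
  have hprod_ind : ∀ I : Finset (Fin n),
      (fun ω => ∏ i ∈ I, X i ω) = Set.indicator (A I) (fun _ => (1:ℝ)) := by
    intro I; funext ω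
    by_cases h : ∀ i ∈ I, X i ω = 1
    · rw [Set.indicator_of_mem (by simpa [hA] using h)]
      exact Finset.prod_eq_one h
    · rw [Set.indicator_of_notMem (by simpa [hA] using h)]
      push_neg at h
      obtain ⟨i, hi, hne⟩ := h
      exact Finset.prod_eq_zero hi ((hbinary i ω).resolve_right hne)
  have hint_prod : ∀ I : Finset (Fin n),
      Integrable (fun ω => ∏ i ∈ I, X i ω) μ := by
    intro I
    rw [hprod_ind I]
    exact (integrable_const (1:ℝ)).indicator (hAmeas I)
  have hval_prod : ∀ I : Finset (Fin n),
      ∫ ω, ∏ i ∈ I, X i ω ∂μ = (μ (A I)).toReal := by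
    intro I
    rw [hprod_ind I, integral_indicator_const (1:ℝ) (hAmeas I)]
    simp
    rfl
  set p : Fin n → ℝ := fun i => (μ {ω | X i ω = 1}).toReal with hp
  have hp0 : ∀ i, 0 ≤ p i := fun i => ENNReal.toReal_nonneg
  -- E = ∑ p i
  have hXi_eq : ∀ i, X i = fun ω => ∏ j ∈ {i}, X j ω := by
    intro i; funext ω; simp
  have hEeq : E = ∑ i, p i := by
    rw [hE]
    rw [integral_finset_sum _ (fun i _ => by rw [hXi_eq i]; exact hint_prod {i})]
    refine Finset.sum_congr rfl fun i _ => ?_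
    rw [hXi_eq i, hval_prod {i}]
    congr 1
    simp [hA]
  have hE0 : 0 ≤ E := hEeq ▸ Finset.sum_nonneg fun i _ => hp0 i
  -- pointwise expansion of exp (t * S ω)
  have hpt : ∀ ω, Real.exp (t * S ω)
      = ∑ I ∈ (Finset.univ : Finset (Fin n)).powerset, δ ^ I.card * ∏ i ∈ I, X i ω := by
    intro ω
    calc Real.exp (t * S ω) = ∏ i, Real.exp (t * X i ω) := by
          rw [← Real.exp_sum, ← Finset.mul_sum]
      _ = ∏ i, (δ * X i ω + 1) := by
          refine Finset.prod_congr rfl fun i _ => ?_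
          rcases hbinary i ω with h | h <;> simp [h, het] <;> linarith
      _ = ∑ I ∈ (Finset.univ : Finset (Fin n)).powerset,
            (∏ i ∈ I, δ * X i ω) * ∏ i ∈ Finset.univ \ I, 1 := Finset.prod_add _ _ _
      _ = ∑ I ∈ (Finset.univ : Finset (Fin n)).powerset, δ ^ I.card * ∏ i ∈ I, X i ω := by
          refine Finset.sum_congr rfl fun I _ => ?_
          rw [Finset.prod_mul_distrib, Finset.prod_const, Finset.prod_const_one, mul_one]
  have hSint : Integrable (fun ω => Real.exp (t * S ω)) μ := by
    have : (fun ω => Real.exp (t * S ω))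
        = fun ω => ∑ I ∈ (Finset.univ : Finset (Fin n)).powerset,
            δ ^ I.card * ∏ i ∈ I, X i ω := funext hpt
    rw [this]
    exact integrable_finset_sum _ fun I _ => (hint_prod I).const_mul _
  -- mgf bound
  have hmgf : mgf S μ t ≤ Real.exp (δ * E) := by
    have h1 : mgf S μ t
        = ∑ I ∈ (Finset.univ : Finset (Fin n)).powerset, δ ^ I.card * (μ (A I)).toReal := by
      rw [mgf]
      simp_rw [hpt]
      rw [integral_finset_sum _ fun I _ => (hint_prod I).const_mul _]
      exact Finset.sum_congr rfl fun I _ => by rw [integral_const_mul, hval_prod I]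
    rw [h1]
    have h2 : ∀ I : Finset (Fin n), (μ (A I)).toReal ≤ ∏ i ∈ I, p i := by
      intro I
      have hne : (∏ i ∈ I, μ {ω | X i ω = 1}) ≠ ⊤ :=
        (ENNReal.prod_lt_top fun i _ => measure_lt_top μ _).ne
      calc (μ (A I)).toReal ≤ ((∏ i ∈ I, μ {ω | X i ω = 1})).toReal :=
            ENNReal.toReal_mono hne (hnegcor1 I)
        _ = ∏ i ∈ I, p i := ENNReal.toReal_prod _ _
    calc ∑ I ∈ (Finset.univ : Finset (Fin n)).powerset, δ ^ I.card * (μ (A I)).toReal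
        ≤ ∑ I ∈ (Finset.univ : Finset (Fin n)).powerset, δ ^ I.card * ∏ i ∈ I, p i := by
          refine Finset.sum_le_sum fun I _ => ?_
          exact mul_le_mul_of_nonneg_left (h2 I) (pow_nonneg hδ0 _)
      _ = ∏ i, (δ * p i + 1) := by
          rw [Finset.prod_add]
          refine Finset.sum_congr rfl fun I _ => ?_
          rw [Finset.prod_mul_distrib, Finset.prod_const, Finset.prod_const_one, mul_one]
      _ ≤ ∏ i, Real.exp (δ * p i) := by
          refine Finset.prod_le_prod (fun i _ => by positivity) fun i _ => ?_
          have := Real.add_one_le_exp (δ * p i)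
          linarith
      _ = Real.exp (∑ i, δ * p i) := (Real.exp_sum _ _).symm
      _ = Real.exp (δ * E) := by rw [← Finset.mul_sum, ← hEeq]
  -- Chernoff
  have key := measure_ge_le_exp_mul_mgf (X := S) (μ := μ) (t := t) ((1+δ)*E) ht0 hSint
  have hfin : μ {ω | (1+δ)*E ≤ S ω} ≠ ⊤ := measure_ne_top μ _
  rw [← ENNReal.ofReal_toReal hfin]
  refine ENNReal.ofReal_le_ofReal ?_
  calc (μ {ω | (1+δ)*E ≤ S ω}).toReal
      ≤ Real.exp (-t * ((1+δ)*E)) * mgf S μ t := key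
    _ ≤ Real.exp (-t * ((1+δ)*E)) * Real.exp (δ * E) :=
        mul_le_mul_of_nonneg_left hmgf (Real.exp_pos _).le
    _ = Real.exp (-t * ((1+δ)*E) + δ * E) := (Real.exp_add _ _).symm
    _ ≤ Real.exp (-δ ^ 2 * E / 3) := by
        rw [Real.exp_le_exp, ht]
        have h := mul_le_mul_of_nonneg_right (log_ineq hδ0 hδ1) hE0
        nlinarith
end
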